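/- In the node-activation model, the entrywise expectation of the product of the random degree and adjacency matrices satisfies E[D_1 A_1] = p³ (D_G − I) A_G + p² A_G, where I is the N×N identity matrix. -/

import Mathlib

open MeasureTheory ProbabilityTheory Matrix

noncomputable section

/-- The real-valued indicator of a Boolean. -/
def ind (b : Bool) : ℝ := if b then 1 else 0

/-- Adjacency matrix of the random induced subgraph: edge {i,j} of `G` is kept
iff both endpoints are active. -/
def A1 {N : ℕ} (G : SimpleGraph (Fin N)) [DecidableRel G.Adj] (X : Fin N → Bool) :
    Matrix (Fin N) (Fin N) ℝ :=
  Matrix.of fun i j => (G.adjMatrix ℝ) i j * ind (X i) * ind (X j)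

/-- Diagonal degree matrix of the random induced subgraph. -/
def D1 {N : ℕ} (G : SimpleGraph (Fin N)) [DecidableRel G.Adj] (X : Fin N → Bool) :
    Matrix (Fin N) (Fin N) ℝ :=
  Matrix.diagonal fun i => ∑ j, A1 G X i j

/-- Laplacian of the random induced subgraph. -/
def L1 {N : ℕ} (G : SimpleGraph (Fin N)) [DecidableRel G.Adj] (X : Fin N → Bool) :
    Matrix (Fin N) (Fin N) ℝ :=
  D1 G X - A1 G X

lemma ind_mul_self (b : Bool) : ind b * ind b = ind b := by cases b <;> simp [ind]

section aux

variable {N : ℕ} {Ω : Type*} [MeasurableSpace Ω] {μ : Measure Ω} [IsProbabilityMeasure μ]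
  {p : ℝ} {X : Fin N → Ω → Bool}

lemma prod_ind_eq (S : Finset (Fin N)) (ω : Ω) :
    (∏ s ∈ S, ind (X s ω)) =
      Set.indicator (⋂ s ∈ S, X s ⁻¹' {true}) (fun _ => (1 : ℝ)) ω := by
  by_cases h : ω ∈ ⋂ s ∈ S, X s ⁻¹' {true}
  · rw [Set.indicator_of_mem h]
    refine Finset.prod_eq_one fun s hs => ?_
    have := Set.mem_iInter₂.1 h s hs
    simp only [Set.mem_preimage, Set.mem_singleton_iff] at this
    simp [ind, this]
  · rw [Set.indicator_of_notMem h]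
    obtain ⟨s, hs, hfalse⟩ : ∃ s ∈ S, X s ω ≠ true := by
      by_contra hc
      push_neg at hc
      exact h (Set.mem_iInter₂.2 fun s hs => by simpa using hc s hs)
    exact Finset.prod_eq_zero hs (by simp [ind, hfalse])

lemma meas_inter_ind (hmeas : ∀ i, Measurable (X i)) (S : Finset (Fin N)) :
    MeasurableSet (⋂ s ∈ S, X s ⁻¹' {true}) :=
  MeasurableSet.biInter (Set.to_countable _)
    (fun s _ => hmeas s (measurableSet_singleton true))

lemma integrable_prod_ind (hmeas : ∀ i, Measurable (X i)) (S : Finset (Fin N)) :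
    Integrable (fun ω => ∏ s ∈ S, ind (X s ω)) μ := by
  simp_rw [prod_ind_eq]
  exact (integrable_const (1 : ℝ)).indicator (meas_inter_ind hmeas S)

lemma integral_prod_ind (hp0 : 0 ≤ p) (hmeas : ∀ i, Measurable (X i))
    (hindep : iIndepFun X μ)
    (hbern : ∀ i, μ {ω | X i ω = true} = ENNReal.ofReal p) (S : Finset (Fin N)) :
    ∫ ω, ∏ s ∈ S, ind (X s ω) ∂μ = p ^ S.card := by
  simp_rw [prod_ind_eq]
  rw [integral_indicator_const (1 : ℝ) (meas_inter_ind hmeas S), measureReal_def]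
  rw [hindep.measure_inter_preimage_eq_mul S (fun i _ => measurableSet_singleton true)]
  have hb : ∀ s : Fin N, μ (X s ⁻¹' {true}) = ENNReal.ofReal p := fun s => by
    rw [← hbern s]; rfl
  simp only [hb, Finset.prod_const, smul_eq_mul, mul_one]
  rw [ENNReal.toReal_pow, ENNReal.toReal_ofReal hp0]

end aux

theorem stmt6 {N : ℕ} (G : SimpleGraph (Fin N)) [DecidableRel G.Adj]
    {Ω : Type*} [MeasurableSpace Ω] (μ : Measure Ω) [IsProbabilityMeasure μ]
    (p : ℝ) (hp0 : 0 ≤ p) (hp1 : p ≤ 1)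
    (X : Fin N → Ω → Bool)
    (hmeas : ∀ i, Measurable (X i))
    (hindep : iIndepFun X μ)
    (hbern : ∀ i, μ {ω | X i ω = true} = ENNReal.ofReal p) :
    ∀ i j, ∫ ω, (D1 G (fun v => X v ω) * A1 G (fun v => X v ω)) i j ∂μ
      = (p ^ 3 • ((G.degMatrix ℝ - 1) * G.adjMatrix ℝ) + p ^ 2 • G.adjMatrix ℝ) i j := by
  intro i j
  classical
  have hRHS : (p ^ 3 • ((G.degMatrix ℝ - 1) * G.adjMatrix ℝ) + p ^ 2 • G.adjMatrix ℝ) i j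
      = p ^ 3 * (((G.degree i : ℝ) - 1) * G.adjMatrix ℝ i j) + p ^ 2 * G.adjMatrix ℝ i j := by
    have hdiag : G.degMatrix ℝ - 1 = Matrix.diagonal (fun v => (G.degree v : ℝ) - 1) := by
      rw [SimpleGraph.degMatrix, ← Matrix.diagonal_one, Matrix.diagonal_sub]
    rw [Matrix.add_apply, Matrix.smul_apply, Matrix.smul_apply, smul_eq_mul, smul_eq_mul,
      hdiag, Matrix.diagonal_mul]
  by_cases hadj : G.Adj i j
  case neg =>
    have h0 : G.adjMatrix ℝ i j = 0 := by simp [hadj]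
    have hpt : ∀ ω : Ω, (D1 G (fun v => X v ω) * A1 G (fun v => X v ω)) i j = 0 := by
      intro ω
      rw [D1, Matrix.diagonal_mul]
      have hA : A1 G (fun v => X v ω) i j = 0 := by
        simp only [A1, Matrix.of_apply, h0, zero_mul]
      rw [hA, mul_zero]
    simp_rw [hpt]
    rw [integral_zero, hRHS, h0]
    ring
  case pos =>
    have hij : i ≠ j := hadj.ne
    have h1 : G.adjMatrix ℝ i j = 1 := by simp [hadj]
    -- pointwise rewrite of the integrand
    have hDA : ∀ ω : Ω, (D1 G (fun v => X v ω) * A1 G (fun v => X v ω)) i j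
        = ∑ k, (G.adjMatrix ℝ i k * G.adjMatrix ℝ i j)
            * (ind (X i ω) * (ind (X k ω) * ind (X j ω))) := by
      intro ω
      rw [D1, Matrix.diagonal_mul, Finset.sum_mul]
      refine Finset.sum_congr rfl fun k _ => ?_
      simp only [A1, Matrix.of_apply]
      rw [show (G.adjMatrix ℝ i k * ind (X i ω) * ind (X k ω))
            * (G.adjMatrix ℝ i j * ind (X i ω) * ind (X j ω))
          = G.adjMatrix ℝ i k * G.adjMatrix ℝ i j
            * ((ind (X i ω) * ind (X i ω)) * (ind (X k ω) * ind (X j ω))) from by ring,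
        ind_mul_self]
    simp_rw [hDA]
    -- integrability of each summand
    have hintk : ∀ k : Fin N,
        Integrable (fun ω => ind (X i ω) * (ind (X k ω) * ind (X j ω))) μ := by
      intro k
      have hmi : Measurable fun ω => ind (X i ω) :=
        (measurable_from_top (f := ind)).comp (hmeas i)
      have hmk : Measurable fun ω => ind (X k ω) :=
        (measurable_from_top (f := ind)).comp (hmeas k)
      have hmj : Measurable fun ω => ind (X j ω) :=
        (measurable_from_top (f := ind)).comp (hmeas j)
      have hm : Measurable (fun ω => ind (X i ω) * (ind (X k ω) * ind (X j ω))) :=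
        hmi.mul (hmk.mul hmj)
      refine (integrable_const (1 : ℝ)).mono' hm.aestronglyMeasurable (ae_of_all _ fun ω => ?_)
      have : ∀ b : Bool, 0 ≤ ind b ∧ ind b ≤ 1 := by intro b; cases b <;> simp [ind]
      rcases this (X i ω) with ⟨h1i, h2i⟩
      rcases this (X k ω) with ⟨h1k, h2k⟩
      rcases this (X j ω) with ⟨h1j, h2j⟩
      rw [Real.norm_eq_abs, abs_of_nonneg (by positivity)]
      calc ind (X i ω) * (ind (X k ω) * ind (X j ω)) ≤ 1 * (1 * 1) := by
            gcongr
        _ = 1 := by ring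
    rw [integral_finset_sum _ (fun k _ => (hintk k).const_mul _)]
    simp_rw [integral_const_mul]
    -- integral values
    have Ej : ∫ ω, ind (X i ω) * (ind (X j ω) * ind (X j ω)) ∂μ = p ^ 2 := by
      have : ∀ ω : Ω, ind (X i ω) * (ind (X j ω) * ind (X j ω))
          = ∏ s ∈ ({i, j} : Finset (Fin N)), ind (X s ω) := by
        intro ω
        rw [ind_mul_self, Finset.prod_pair hij]
      simp_rw [this]
      rw [integral_prod_ind hp0 hmeas hindep hbern, Finset.card_pair hij]
    have Etrip : ∀ k : Fin N, i ≠ k → k ≠ j →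
        ∫ ω, ind (X i ω) * (ind (X k ω) * ind (X j ω)) ∂μ = p ^ 3 := by
      intro k hik hkj
      have hmem1 : i ∉ ({k, j} : Finset (Fin N)) := by simp [hik, hij]
      have hmem2 : k ∉ ({j} : Finset (Fin N)) := by simp [hkj]
      have : ∀ ω : Ω, ind (X i ω) * (ind (X k ω) * ind (X j ω))
          = ∏ s ∈ insert i ({k, j} : Finset (Fin N)), ind (X s ω) := by
        intro ω
        rw [Finset.prod_insert hmem1, Finset.prod_pair hkj]
      simp_rw [this]
      rw [integral_prod_ind hp0 hmeas hindep hbern]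
      rw [Finset.card_insert_of_notMem hmem1, Finset.card_pair hkj]
    -- now compute the sum
    have hsum : ∑ k, G.adjMatrix ℝ i k * G.adjMatrix ℝ i j
          * (∫ ω, ind (X i ω) * (ind (X k ω) * ind (X j ω)) ∂μ)
        = ∑ k, (p ^ 3 * G.adjMatrix ℝ i k
            + if k = j then (p ^ 2 - p ^ 3) * G.adjMatrix ℝ i k else 0) := by
      refine Finset.sum_congr rfl fun k _ => ?_
      by_cases hkj : k = j
      · subst hkj
        rw [Ej, if_pos rfl, h1]
        ring
      · rw [if_neg hkj]
        by_cases hik : G.Adj i k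
        · rw [Etrip k hik.ne hkj, h1]
          ring
        · have h0k : G.adjMatrix ℝ i k = 0 := by simp [hik]
          rw [h0k]
          ring
    rw [hsum, Finset.sum_add_distrib, Finset.sum_ite_eq' Finset.univ j
      (fun k => (p ^ 2 - p ^ 3) * G.adjMatrix ℝ i k)]
    have hdeg : ∑ k, G.adjMatrix ℝ i k = (G.degree i : ℝ) := by
      simp [SimpleGraph.adjMatrix_apply, SimpleGraph.degree, SimpleGraph.neighborFinset,
        Finset.sum_ite_mem, Finset.sum_boole]
    rw [← Finset.mul_sum, hdeg, hRHS, h1]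
    simp only [Finset.mem_univ, if_true]
    ring

end
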